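/- Either for no positive integer m does there exist a proper extension of c of size m, or there exists a polynomial χ_{G,c} of degree |V| − |A| such that for every integer m ≥ k, χ_{G,c}(m) equals the number of proper extensions of c of size m. -/

import Mathlib

open Finset Polynomial

namespace HM

variable {V : Type*} [Fintype V]

open scoped Classical in
/-- The finset of proper extensions of `c` of size `m`. -/
noncomputable def EE (G : SimpleGraph V) (A : Set V) (c : V → ℕ) (m : ℕ) : Finset (V → ℕ) :=
  (Fintype.piFinset fun _ : V => Finset.Icc 1 m).filter
    (fun cc => (∀ a ∈ A, cc a = c a) ∧ ∀ u v : V, G.Adj u v → cc u ≠ cc v)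

lemma mem_EE {G : SimpleGraph V} {A : Set V} {c : V → ℕ} {m : ℕ} {cc : V → ℕ} :
    cc ∈ EE G A c m ↔ (∀ v, 1 ≤ cc v ∧ cc v ≤ m) ∧ (∀ a ∈ A, cc a = c a) ∧
      ∀ u v : V, G.Adj u v → cc u ≠ cc v := by
  classical
  simp [EE, Fintype.mem_piFinset, Finset.mem_Icc, and_assoc]

open scoped Classical in
/-- Proper extensions of size `k + t` using every color in `(k, k+t]`. -/
noncomputable def XX (G : SimpleGraph V) (A : Set V) (c : V → ℕ) (k t : ℕ) :
    Finset (V → ℕ) :=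
  (EE G A c (k + t)).filter (fun cc => ∀ j ∈ Finset.Ioc k (k + t), ∃ v, cc v = j)

lemma mem_XX {G : SimpleGraph V} {A : Set V} {c : V → ℕ} {k t : ℕ} {cc : V → ℕ} :
    cc ∈ XX G A c k t ↔ cc ∈ EE G A c (k + t) ∧ ∀ j ∈ Finset.Ioc k (k + t), ∃ v, cc v = j := by
  classical
  simp [XX]

open scoped Classical in
/-- The complement of `A` as a finset. -/
noncomputable def Bf (A : Set V) : Finset V := Finset.univ.filter (fun v => v ∉ A)

lemma mem_Bf {A : Set V} {v : V} : v ∈ Bf A ↔ v ∉ A := by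
  classical
  simp [Bf]

/-- "Denormalization": replace colors `> k` by elements of `H` in order. -/
def up (k : ℕ) (H : Finset ℕ) (cc : V → ℕ) : V → ℕ :=
  fun v => if cc v ≤ k then cc v else (H.sort (· ≤ ·)).getD (cc v - (k + 1)) 0

open scoped Classical in
/-- The set of high colors used by `cc`. -/
noncomputable def highs (k : ℕ) (cc : V → ℕ) : Finset ℕ :=
  (Finset.univ.image cc).filter (fun x => k < x)

lemma mem_highs {k : ℕ} {cc : V → ℕ} {x : ℕ} :
    x ∈ highs k cc ↔ (∃ v, cc v = x) ∧ k < x := by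
  classical
  simp [highs]

open scoped Classical in
/-- "Normalization": replace colors `> k` by their rank shifted by `k+1`. -/
noncomputable def down (k : ℕ) (cc : V → ℕ) : V → ℕ :=
  fun v => if cc v ≤ k then cc v
    else k + 1 + ((highs k cc).sort (· ≤ ·)).idxOf (cc v)

section Spec

variable {G : SimpleGraph V} {A : Set V} {c : V → ℕ} {k m t : ℕ}

lemma up_spec (hc : ∀ a ∈ A, c a ≤ k) (hm : k ≤ m) {cc : V → ℕ}
    (hcc : cc ∈ XX G A c k t) {H : Finset ℕ} (hH : H ⊆ Finset.Ioc k m)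
    (hHc : H.card = t) :
    up k H cc ∈ EE G A c m ∧ highs k (up k H cc) = H ∧ down k (up k H cc) = cc := by
  classical
  obtain ⟨hccE, hsurj⟩ := mem_XX.1 hcc
  obtain ⟨hbd, hA, hpr⟩ := mem_EE.1 hccE
  set L := H.sort (· ≤ ·) with hL
  have hlen : L.length = t := by rw [hL, Finset.length_sort, hHc]
  have hmemL : ∀ x, x ∈ L ↔ x ∈ H := fun x => Finset.mem_sort _
  have hnd : L.Nodup := Finset.sort_nodup _ _
  have hidx : ∀ v, ¬ cc v ≤ k → cc v - (k + 1) < L.length := by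
    intro v h
    have h1 := (hbd v).2
    omega
  have hupE : ∀ v (h : ¬ cc v ≤ k), up k H cc v = L[cc v - (k + 1)]'(hidx v h) := by
    intro v h
    simp only [up, if_neg h, ← hL]
    exact List.getD_eq_getElem _ _ (hidx v h)
  have hHmem : ∀ v (h : ¬ cc v ≤ k), up k H cc v ∈ H := by
    intro v h
    rw [hupE v h, ← hmemL]
    exact List.getElem_mem _
  have hgt : ∀ v (h : ¬ cc v ≤ k), k < up k H cc v := by
    intro v h
    exact (Finset.mem_Ioc.1 (hH (hHmem v h))).1
  have hle : ∀ v (h : ¬ cc v ≤ k), up k H cc v ≤ m := by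
    intro v h
    exact (Finset.mem_Ioc.1 (hH (hHmem v h))).2
  have hmemE : up k H cc ∈ EE G A c m := by
    rw [mem_EE]
    refine ⟨fun v => ?_, fun a ha => ?_, fun u v huv => ?_⟩
    · by_cases h : cc v ≤ k
      · simp only [up, if_pos h]
        exact ⟨(hbd v).1, le_trans h hm⟩
      · exact ⟨by have := hgt v h; omega, hle v h⟩
    · have h : cc a ≤ k := by rw [hA a ha]; exact hc a ha
      simp only [up, if_pos h]
      exact hA a ha
    · have hne := hpr u v huv
      by_cases hu : cc u ≤ k <;> by_cases hv : cc v ≤ k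
      · simp only [up, if_pos hu, if_pos hv]; exact hne
      · have h2 := hgt v hv
        have h1 : up k H cc u = cc u := by simp only [up, if_pos hu]
        omega
      · have h2 := hgt u hu
        have h1 : up k H cc v = cc v := by simp only [up, if_pos hv]
        omega
      · rw [hupE u hu, hupE v hv]
        intro heq
        rw [hnd.getElem_inj_iff] at heq
        omega
  have hhighs : highs k (up k H cc) = H := by
    ext x
    rw [mem_highs]
    constructor
    · rintro ⟨⟨v, hv⟩, hx⟩
      by_cases h : cc v ≤ k
      · simp only [up, if_pos h] at hv; omega
      · rw [← hv, hupE v h, ← hmemL]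
        exact List.getElem_mem _
    · intro hx
      have hxL : x ∈ L := (hmemL x).2 hx
      obtain ⟨i, hi, hxi⟩ := List.mem_iff_getElem.1 hxL
      have hj : k + 1 + i ∈ Finset.Ioc k (k + t) := by
        rw [Finset.mem_Ioc]; rw [hlen] at hi; omega
      obtain ⟨v, hv⟩ := hsurj _ hj
      have h : ¬ cc v ≤ k := by omega
      refine ⟨⟨v, ?_⟩, (Finset.mem_Ioc.1 (hH hx)).1⟩
      rw [hupE v h, ← hxi]
      congr 1
      omega
  have hdown : down k (up k H cc) = cc := by
    funext v
    by_cases h : cc v ≤ k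
    · simp only [up, down, if_pos h]
    · have h2 : ¬ up k H cc v ≤ k := by have := hgt v h; omega
      simp only [down, if_neg h2, hhighs, ← hL]
      rw [hupE v h, List.Nodup.idxOf_getElem hnd]
      have := hidx v h
      omega
  exact ⟨hmemE, hhighs, hdown⟩

lemma down_spec (hc : ∀ a ∈ A, c a ≤ k) {cc : V → ℕ} (hcc : cc ∈ EE G A c m) :
    down k cc ∈ XX G A c k (highs k cc).card ∧ highs k cc ⊆ Finset.Ioc k m ∧
      (highs k cc).card ≤ (Bf A).card ∧ up k (highs k cc) (down k cc) = cc := by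
  classical
  obtain ⟨hbd, hA, hpr⟩ := mem_EE.1 hcc
  set H := highs k cc with hHdef
  set t := H.card with htdef
  set L := H.sort (· ≤ ·) with hL
  have hlen : L.length = t := by rw [hL, Finset.length_sort]
  have hmemL : ∀ x, x ∈ L ↔ x ∈ H := fun x => Finset.mem_sort _
  have hnd : L.Nodup := Finset.sort_nodup _ _
  have hHsub : H ⊆ Finset.Ioc k m := by
    intro x hx
    rw [hHdef, mem_highs] at hx
    obtain ⟨⟨v, hv⟩, hk⟩ := hx
    rw [Finset.mem_Ioc]
    exact ⟨hk, hv ▸ (hbd v).2⟩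
  have hHBf : H.card ≤ (Bf A).card := by
    have hsub : H ⊆ (Bf A).image cc := by
      intro x hx
      rw [hHdef, mem_highs] at hx
      obtain ⟨⟨v, hv⟩, hk⟩ := hx
      have hvB : v ∈ Bf A := by
        rw [mem_Bf]
        intro hvA
        have := hc v hvA
        rw [hA v hvA] at hv
        omega
      exact Finset.mem_image.2 ⟨v, hvB, hv⟩
    exact le_trans (Finset.card_le_card hsub) Finset.card_image_le
  have hmemH : ∀ v, ¬ cc v ≤ k → cc v ∈ L := by
    intro v h
    rw [hmemL, hHdef, mem_highs]
    exact ⟨⟨v, rfl⟩, by omega⟩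
  have hidxlt : ∀ v (h : ¬ cc v ≤ k), L.idxOf (cc v) < t := by
    intro v h
    rw [← hlen]
    exact List.idxOf_lt_length_iff.2 (hmemH v h)
  have hdownE : ∀ v (h : ¬ cc v ≤ k), down k cc v = k + 1 + L.idxOf (cc v) := by
    intro v h
    simp only [down, if_neg h, ← hHdef, ← hL]
  have hXX : down k cc ∈ XX G A c k t := by
    rw [mem_XX, mem_EE]
    refine ⟨⟨fun v => ?_, fun a ha => ?_, fun u v huv => ?_⟩, fun j hj => ?_⟩
    · by_cases h : cc v ≤ k
      · simp only [down, if_pos h]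
        exact ⟨(hbd v).1, by omega⟩
      · rw [hdownE v h]
        have := hidxlt v h
        omega
    · have h : cc a ≤ k := by rw [hA a ha]; exact hc a ha
      simp only [down, if_pos h]
      exact hA a ha
    · have hne := hpr u v huv
      by_cases hu : cc u ≤ k <;> by_cases hv : cc v ≤ k
      · simp only [down, if_pos hu, if_pos hv]; exact hne
      · rw [hdownE v hv]; simp only [down, if_pos hu]; omega
      · rw [hdownE u hu]; simp only [down, if_pos hv]; omega
      · rw [hdownE u hu, hdownE v hv]
        intro heq
        have hiu := hidxlt u hu
        have hiv := hidxlt v hv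
        have : L.idxOf (cc u) = L.idxOf (cc v) := by omega
        apply hne
        have h1 := List.getElem_idxOf (xs := L) (x := cc u)
          (List.idxOf_lt_length_iff.2 (hmemH u hu))
        have h2 := List.getElem_idxOf (xs := L) (x := cc v)
          (List.idxOf_lt_length_iff.2 (hmemH v hv))
        rw [← h1, ← h2]
        congr 1
    · rw [Finset.mem_Ioc] at hj
      have hi : j - (k + 1) < L.length := by rw [hlen]; omega
      have hLH : L[j - (k+1)] ∈ H := (hmemL _).1 (List.getElem_mem _)
      rw [hHdef, mem_highs] at hLH
      obtain ⟨⟨v, hv⟩, hk⟩ := hLH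
      have h : ¬ cc v ≤ k := by omega
      refine ⟨v, ?_⟩
      rw [hdownE v h, hv, List.Nodup.idxOf_getElem hnd]
      omega
  have hup : up k H (down k cc) = cc := by
    funext v
    by_cases h : cc v ≤ k
    · simp only [up, down, if_pos h]
    · have h2 : ¬ down k cc v ≤ k := by rw [hdownE v h]; omega
      simp only [up, if_neg h2, ← hL]
      rw [hdownE v h]
      have hilt : L.idxOf (cc v) < L.length := List.idxOf_lt_length_iff.2 (hmemH v h)
      have : k + 1 + L.idxOf (cc v) - (k + 1) = L.idxOf (cc v) := by omega
      rw [this, List.getD_eq_getElem _ _ hilt, List.getElem_idxOf hilt]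
  exact ⟨hXX, hHsub, hHBf, hup⟩

/-- The main counting identity. -/
lemma card_EE (hc : ∀ a ∈ A, c a ≤ k) (hm : k ≤ m) :
    (EE G A c m).card =
      ∑ t ∈ Finset.range ((Bf A).card + 1), (XX G A c k t).card * (m - k).choose t := by
  classical
  set n := (Bf A).card with hn
  have hcard : ∀ t, ((Finset.Ioc k m).powersetCard t).card = (m - k).choose t := by
    intro t
    rw [Finset.card_powersetCard, Nat.card_Ioc]
  calc (EE G A c m).card
      = ((Finset.range (n + 1)).sigma
          (fun t => (XX G A c k t) ×ˢ (Finset.Ioc k m).powersetCard t)).card := by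
        refine (Finset.card_bij' (fun cc _ => (⟨(highs k cc).card, (down k cc, highs k cc)⟩ :
            (_ : ℕ) × ((V → ℕ) × Finset ℕ)))
          (fun p _ => up k p.2.2 p.2.1) ?_ ?_ ?_ ?_)
        · intro cc hcc
          obtain ⟨h1, h2, h3, _⟩ := down_spec hc hcc
          rw [Finset.mem_sigma, Finset.mem_range, Finset.mem_product,
            Finset.mem_powersetCard]
          refine ⟨?_, h1, h2, rfl⟩
          show (highs k cc).card < n + 1
          omega
        · rintro ⟨t, cc, H⟩ hp
          rw [Finset.mem_sigma, Finset.mem_product, Finset.mem_powersetCard] at hp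
          exact (up_spec hc hm hp.2.1 hp.2.2.1 hp.2.2.2).1
        · intro cc hcc
          exact (down_spec hc hcc).2.2.2
        · rintro ⟨t, cc, H⟩ hp
          rw [Finset.mem_sigma, Finset.mem_product, Finset.mem_powersetCard] at hp
          obtain ⟨_, hhighs, hdown⟩ := up_spec hc hm hp.2.1 hp.2.2.1 hp.2.2.2
          dsimp only
          simp only [hhighs, hdown, hp.2.2.2]
    _ = ∑ t ∈ Finset.range (n + 1), (XX G A c k t).card * (m - k).choose t := by
        rw [Finset.card_sigma]
        refine Finset.sum_congr rfl fun t _ => ?_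
        rw [Finset.card_product, hcard]

/-- If `c` is a proper partial coloring, there is an extension using all of the
`n` fresh colors. -/
lemma XX_top_nonempty (hc : ∀ a ∈ A, 1 ≤ c a ∧ c a ≤ k)
    (hproper : ∀ a ∈ A, ∀ b ∈ A, G.Adj a b → c a ≠ c b) :
    (XX G A c k (Bf A).card).Nonempty := by
  classical
  set n := (Bf A).card with hn
  set e := (Bf A).equivFin with he
  refine ⟨fun v => if h : v ∈ Bf A then k + 1 + (e ⟨v, h⟩ : ℕ) else c v, ?_⟩
  rw [mem_XX, mem_EE]
  refine ⟨⟨fun v => ?_, fun a ha => ?_, fun u v huv => ?_⟩, fun j hj => ?_⟩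
  · by_cases h : v ∈ Bf A
    · simp only [dif_pos h]
      have := (e ⟨v, h⟩).2
      omega
    · simp only [dif_neg h]
      rw [mem_Bf, not_not] at h
      have := hc v h
      omega
  · have h : a ∉ Bf A := by rw [mem_Bf, not_not]; exact ha
    simp only [dif_neg h]
  · by_cases hu : u ∈ Bf A <;> by_cases hv : v ∈ Bf A
    · simp only [dif_pos hu, dif_pos hv]
      intro heq
      have : e ⟨u, hu⟩ = e ⟨v, hv⟩ := by
        apply Fin.ext
        omega
      have := e.injective this
      exact G.ne_of_adj huv (congrArg Subtype.val this)
    · simp only [dif_pos hu, dif_neg hv]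
      rw [mem_Bf, not_not] at hv
      have := hc v hv
      omega
    · simp only [dif_neg hu, dif_pos hv]
      rw [mem_Bf, not_not] at hu
      have := hc u hu
      omega
    · have huA : u ∈ A := by simpa [mem_Bf] using hu
      have hvA : v ∈ A := by simpa [mem_Bf] using hv
      simp only [dif_neg hu, dif_neg hv]
      exact hproper u huA v hvA huv
  · rw [Finset.mem_Ioc] at hj
    have hi : j - (k + 1) < n := by omega
    set w := e.symm ⟨j - (k + 1), hi⟩ with hw
    refine ⟨w.1, ?_⟩
    have h : (w : V) ∈ Bf A := w.2
    simp only [dif_pos h]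
    have : (⟨(w : V), h⟩ : {x // x ∈ Bf A}) = w := rfl
    rw [this, hw, e.apply_symm_apply]
    simp
    omega

end Spec

end HM

open HM Finset Polynomial in
/-- Herzberg–Murty: either no proper extension of the partial
coloring `c` exists for any size, or there is a polynomial `χ_{G,c}` of degree
`|V| - |A|` counting the proper extensions of `c` of size `m` for all `m ≥ k`. -/
theorem stmt16 (V : Type*) [Fintype V] (G : SimpleGraph V) (A : Set V)
    (k : ℕ) (hk : 1 ≤ k) (c : V → ℕ) (hc : ∀ a ∈ A, 1 ≤ c a ∧ c a ≤ k) :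
    (∀ m : ℕ, 0 < m →
      ¬ ∃ cc : V → ℕ, (∀ v, 1 ≤ cc v ∧ cc v ≤ m) ∧ (∀ a ∈ A, cc a = c a) ∧
        ∀ u v : V, G.Adj u v → cc u ≠ cc v) ∨
    ∃ χ : Polynomial ℝ,
      χ.natDegree = Fintype.card V - A.ncard ∧
      ∀ m : ℕ, k ≤ m →
        χ.eval (m : ℝ) =
          Nat.card {cc : V → ℕ | (∀ v, 1 ≤ cc v ∧ cc v ≤ m) ∧ (∀ a ∈ A, cc a = c a) ∧
            ∀ u v : V, G.Adj u v → cc u ≠ cc v} := by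
  classical
  by_cases hproper : ∀ a ∈ A, ∀ b ∈ A, G.Adj a b → c a ≠ c b
  case neg =>
    left
    push_neg at hproper
    obtain ⟨a, ha, b, hb, hab, hcab⟩ := hproper
    rintro m _ ⟨cc, _, hA, hpr⟩
    exact hpr a b hab (by rw [hA a ha, hA b hb, hcab])
  case pos =>
    right
    set n := (Bf A).card with hn
    set a : ℕ → ℕ := fun t => (XX G A c k t).card with ha
    set χ : Polynomial ℝ := ∑ t ∈ Finset.range (n + 1),
      Polynomial.C ((a t : ℝ) / t.factorial) *
        (descPochhammer ℝ t).comp (Polynomial.X - Polynomial.C (k : ℝ)) with hχ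
    have hcardn : n = Fintype.card V - A.ncard := by
      have h1 : A.ncard = (Finset.univ.filter (fun v => v ∈ A)).card := by
        rw [← Nat.card_coe_set_eq, Nat.card_eq_fintype_card]
        exact Fintype.card_subtype _
      have h2 : (Finset.univ.filter (fun v => v ∈ A)).card +
          (Finset.univ.filter (fun v => v ∉ A)).card = Fintype.card V := by
        rw [Finset.card_filter_add_card_filter_not]
        rfl
      rw [hn]
      unfold Bf
      omega
    have hdegterm : ∀ t, ((descPochhammer ℝ t).comp
        (Polynomial.X - Polynomial.C (k : ℝ))).natDegree = t := by
      intro t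
      rw [Polynomial.natDegree_comp, descPochhammer_natDegree,
        Polynomial.natDegree_X_sub_C, mul_one]
    have hmonterm : ∀ t, ((descPochhammer ℝ t).comp
        (Polynomial.X - Polynomial.C (k : ℝ))).Monic := by
      intro t
      exact (monic_descPochhammer ℝ t).comp (Polynomial.monic_X_sub_C _)
        (by rw [Polynomial.natDegree_X_sub_C]; omega)
    have hane : a n ≠ 0 := by
      have h := XX_top_nonempty (G := G) hc hproper
      rw [← Finset.card_pos] at h
      simp only [ha, hn]
      omega
    have hdeg : χ.natDegree = n := by
      have hle : χ.natDegree ≤ n := by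
        rw [hχ]
        refine Polynomial.natDegree_sum_le_of_forall_le _ _ fun t ht => ?_
        refine le_trans (Polynomial.natDegree_mul_le) ?_
        rw [Polynomial.natDegree_C, hdegterm t, zero_add]
        rw [Finset.mem_range] at ht
        omega
      have hcoeff : χ.coeff n = (a n : ℝ) / n.factorial := by
        rw [hχ, Polynomial.finset_sum_coeff, Finset.sum_range_succ]
        have hzero : ∀ t ∈ Finset.range n,
            (Polynomial.C ((a t : ℝ) / t.factorial) *
              (descPochhammer ℝ t).comp (Polynomial.X - Polynomial.C (k : ℝ))).coeff n = 0 := by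
          intro t ht
          rw [Finset.mem_range] at ht
          apply Polynomial.coeff_eq_zero_of_natDegree_lt
          refine lt_of_le_of_lt (le_trans Polynomial.natDegree_mul_le ?_) ht
          rw [Polynomial.natDegree_C, hdegterm t, zero_add]
        rw [Finset.sum_eq_zero hzero, zero_add, Polynomial.coeff_C_mul]
        have : ((descPochhammer ℝ n).comp
            (Polynomial.X - Polynomial.C (k : ℝ))).coeff n = 1 := by
          have := (hmonterm n).coeff_natDegree
          rwa [hdegterm n] at this
        rw [this, mul_one]
      have hne : χ.coeff n ≠ 0 := by
        rw [hcoeff]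
        positivity
      exact le_antisymm hle (Polynomial.le_natDegree_of_ne_zero hne)
    refine ⟨χ, by rw [hdeg, hcardn], fun m hm => ?_⟩
    have hset : {cc : V → ℕ | (∀ v, 1 ≤ cc v ∧ cc v ≤ m) ∧ (∀ a ∈ A, cc a = c a) ∧
        ∀ u v : V, G.Adj u v → cc u ≠ cc v} = ↑(EE G A c m) := by
      ext cc
      rw [Finset.mem_coe, mem_EE]
      rfl
    have hcount : Nat.card {cc : V → ℕ | (∀ v, 1 ≤ cc v ∧ cc v ≤ m) ∧
        (∀ a ∈ A, cc a = c a) ∧ ∀ u v : V, G.Adj u v → cc u ≠ cc v} = (EE G A c m).card := by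
      rw [hset, Nat.card_coe_set_eq, Set.ncard_coe_finset]
    rw [hcount, card_EE (fun v hv => (hc v hv).2) hm]
    rw [hχ, Polynomial.eval_finset_sum]
    have hcast : (m : ℝ) - (k : ℝ) = ((m - k : ℕ) : ℝ) := by
      push_cast [Nat.cast_sub hm]
      ring
    have hterm : ∀ t, (Polynomial.C ((a t : ℝ) / t.factorial) *
        (descPochhammer ℝ t).comp (Polynomial.X - Polynomial.C (k : ℝ))).eval (m : ℝ) =
        (a t : ℝ) * (m - k).choose t := by
      intro t
      rw [Polynomial.eval_mul, Polynomial.eval_C, Polynomial.eval_comp,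
        Polynomial.eval_sub, Polynomial.eval_X, Polynomial.eval_C, hcast,
        descPochhammer_eval_eq_descFactorial, Nat.descFactorial_eq_factorial_mul_choose]
      have hfac : (t.factorial : ℝ) ≠ 0 := by positivity
      push_cast
      field_simp
    rw [Finset.sum_congr rfl fun t _ => hterm t]
    push_cast
    ring
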